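/- There exists a Zariski-open dense subset U of the determinantal variety M = {X ∈ ℝ^{m×n} : rank X ≤ r} such that for every X* ∈ U, the variety Y_{X*} (the common zero locus of all the polynomials q_{ℓ,j}, ℓ ∈ [m], j ∈ [n]) equals exactly the finite set {(B*_Π, C*_Π) : Π ∈ 𝒫_m}, where for each Π ∈ 𝒫_m, (B*_Π, C*_Π) is the unique factorization Π X* = B*_Π C*_Π with the top r×r block of B*_Π equal to the identity matrix. -/

import Mathlib

set_option maxHeartbeats 1000000

/-- `P` is an `m × m` permutation matrix. -/
def IsPermMatrix {m : ℕ} (P : Matrix (Fin m) (Fin m) ℝ) : Prop :=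
  ∃ σ : Equiv.Perm (Fin m), P = σ.permMatrix ℝ

/-- The determinantal variety `M = {X ∈ ℝ^{m×n} : rank X ≤ r}`. -/
def detVar (m n r : ℕ) : Set (Matrix (Fin m) (Fin n) ℝ) :=
  {X | X.rank ≤ r}

/-- Evaluation of a polynomial in the matrix entries at a matrix. -/
noncomputable def polyEval {m n : ℕ} (p : MvPolynomial (Fin m × Fin n) ℝ)
    (X : Matrix (Fin m) (Fin n) ℝ) : ℝ :=
  MvPolynomial.eval (fun q => X q.1 q.2) p

/-- `U` is a nonempty Zariski-open (hence dense) subset of the determinantal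
variety. -/
def IsZariskiOpenDense (m n r : ℕ) (U : Set (Matrix (Fin m) (Fin n) ℝ)) : Prop :=
  ∃ (k : ℕ) (ps : Fin k → MvPolynomial (Fin m × Fin n) ℝ),
    (∃ (i : Fin k) (X : Matrix (Fin m) (Fin n) ℝ),
        X ∈ detVar m n r ∧ polyEval (ps i) X ≠ 0) ∧
    U = {X ∈ detVar m n r | ∃ i : Fin k, polyEval (ps i) X ≠ 0}

/-- The top `r × r` block of the `m × r` matrix `B` is the identity matrix. -/
def topIdentity {m r : ℕ} (h : r ≤ m) (B : Matrix (Fin m) (Fin r) ℝ) : Prop :=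
  ∀ i k : Fin r, B (Fin.castLE h i) k = if i = k then (1 : ℝ) else 0

/-- The variety `Y_{X*}`: pairs `(B, C)` with identity top `r × r` block of `B`
on which all the polynomials `q_{ℓ,j}(B,C) = Σᵢ (bᵢᵀcⱼ)^ℓ − Σᵢ (x*ᵢⱼ)^ℓ`,
`ℓ ∈ [m]`, `j ∈ [n]`, vanish. -/
def YX {m n r : ℕ} (h : r ≤ m) (Xstar : Matrix (Fin m) (Fin n) ℝ) :
    Set (Matrix (Fin m) (Fin r) ℝ × Matrix (Fin r) (Fin n) ℝ) :=
  {p | topIdentity h p.1 ∧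
    ∀ ℓ ∈ Finset.Icc 1 m, ∀ j : Fin n,
      ∑ i : Fin m, ((p.1 * p.2) i j) ^ ℓ = ∑ i : Fin m, (Xstar i j) ^ ℓ}

section Auxiliary

open Matrix MvPolynomial Finset

open Matrix MvPolynomial Finset

/-- sum over Fin r of dite with condition < t equals sum over Fin t. -/
lemma sum_fin_dite {M : Type*} [AddCommMonoid M] {t r : ℕ} (h : t ≤ r) (f : Fin t → M) :
    ∑ k : Fin r, (if hk : (k : ℕ) < t then f ⟨k, hk⟩ else 0) = ∑ k : Fin t, f k := by
  rw [Fin.sum_univ_eq_sum_range (fun k => if hk : k < t then f ⟨k, hk⟩ else 0) r,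
    ← Finset.sum_subset (Finset.range_subset_range.mpr h)
      (fun x _ hx => dif_neg (by simpa using hx)),
    ← Fin.sum_univ_eq_sum_range (fun k => if hk : k < t then f ⟨k, hk⟩ else 0) t]
  exact Finset.sum_congr rfl fun k _ => by rw [dif_pos k.2]

/-- Rank factorization. -/
lemma exists_factorization {m n r : ℕ} (X : Matrix (Fin m) (Fin n) ℝ) (h : X.rank ≤ r) :
    ∃ (B : Matrix (Fin m) (Fin r) ℝ) (C : Matrix (Fin r) (Fin n) ℝ), X = B * C := by
  classical
  set V := LinearMap.range X.mulVecLin with hV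
  have hfr : Module.finrank ℝ V = X.rank := rfl
  let b : Module.Basis (Fin X.rank) ℝ V := (Module.finBasis ℝ V).reindex (finCongr hfr)
  have hmem : ∀ j : Fin n, X.mulVec (Pi.single j 1) ∈ V := fun j => ⟨Pi.single j 1, rfl⟩
  let w : Fin n → V := fun j => ⟨X.mulVec (Pi.single j 1), hmem j⟩
  let B : Matrix (Fin m) (Fin r) ℝ :=
    fun i k => if hk : (k : ℕ) < X.rank then ((b ⟨k, hk⟩ : V) : Fin m → ℝ) i else 0
  let C : Matrix (Fin r) (Fin n) ℝ :=
    fun k j => if hk : (k : ℕ) < X.rank then b.repr (w j) ⟨k, hk⟩ else 0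
  refine ⟨B, C, ?_⟩
  ext i j
  rw [Matrix.mul_apply]
  symm
  calc ∑ k : Fin r, B i k * C k j
      = ∑ k : Fin r, (if hk : (k : ℕ) < X.rank
          then ((b ⟨k, hk⟩ : V) : Fin m → ℝ) i * b.repr (w j) ⟨k, hk⟩ else 0) :=
        Finset.sum_congr rfl fun k _ => by
          by_cases hk : (k : ℕ) < X.rank <;> simp [B, C, hk]
    _ = ∑ k : Fin X.rank, ((b k : V) : Fin m → ℝ) i * b.repr (w j) k :=
        sum_fin_dite h (fun k => ((b k : V) : Fin m → ℝ) i * b.repr (w j) k)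
    _ = X i j := by
        have hx : X i j = ((w j : Fin m → ℝ)) i := by
          simp [w, Matrix.mulVec, dotProduct, Pi.single_apply]
        rw [hx, ← b.sum_repr (w j)]
        push_cast [Submodule.coe_sum]
        rw [Finset.sum_apply]
        exact Finset.sum_congr rfl fun k _ => by simp [mul_comm]

lemma esymm_eq_of_psum_eq {m : ℕ} (u v : Fin m → ℝ)
    (h : ∀ ℓ ∈ Finset.Icc 1 m, ∑ i, u i ^ ℓ = ∑ i, v i ^ ℓ) :
    ∀ k ≤ m, aeval u (esymm (Fin m) ℝ k) = aeval v (esymm (Fin m) ℝ k) := by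
  intro k hk
  induction k using Nat.strong_induction_on with
  | _ k IH =>
  rcases Nat.eq_zero_or_pos k with hk0 | hk0
  · subst hk0; simp [esymm_zero]
  · have hN := fun (w : Fin m → ℝ) => congrArg (aeval w) (mul_esymm_eq_sum (Fin m) ℝ k)
    have hPsum : ∀ (w : Fin m → ℝ) (ℓ : ℕ), aeval w (psum (Fin m) ℝ ℓ) = ∑ i, w i ^ ℓ := by
      intro w ℓ; simp [psum]
    have key : ∀ w : Fin m → ℝ, (k : ℝ) * aeval w (esymm (Fin m) ℝ k) =
        (-1) ^ (k + 1) * ∑ a ∈ (Finset.HasAntidiagonal.antidiagonal k).filter (fun a => a.1 < k),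
          (-1) ^ a.1 * aeval w (esymm (Fin m) ℝ a.1) * (∑ i, w i ^ a.2) := by
      intro w
      have := hN w
      simp only [_root_.map_mul, map_pow, map_natCast, map_neg, _root_.map_one, map_sum, hPsum] at this
      exact this
    have hsum_eq : ∑ a ∈ (Finset.HasAntidiagonal.antidiagonal k).filter (fun a => a.1 < k),
          (-1) ^ a.1 * aeval u (esymm (Fin m) ℝ a.1) * (∑ i, u i ^ a.2)
        = ∑ a ∈ (Finset.HasAntidiagonal.antidiagonal k).filter (fun a => a.1 < k),
          (-1) ^ a.1 * aeval v (esymm (Fin m) ℝ a.1) * (∑ i, v i ^ a.2) := by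
      refine Finset.sum_congr rfl fun a ha => ?_
      rw [Finset.mem_filter, Finset.HasAntidiagonal.mem_antidiagonal] at ha
      have h1 : a.1 < k := ha.2
      have h2 : 1 ≤ a.2 := by omega
      have h2' : a.2 ≤ m := by omega
      rw [IH a.1 h1 (by omega), h a.2 (Finset.mem_Icc.mpr ⟨h2, h2'⟩)]
    have := (key u).trans (by rw [hsum_eq, ← key v])
    exact mul_left_cancel₀ (by exact_mod_cast hk0.ne') this

lemma multiset_map_eq_of_psum_eq {m : ℕ} (u v : Fin m → ℝ)
    (h : ∀ ℓ ∈ Finset.Icc 1 m, ∑ i, u i ^ ℓ = ∑ i, v i ^ ℓ) :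
    Finset.univ.val.map u = Finset.univ.val.map v := by
  classical
  set s := Finset.univ.val.map u with hs
  set t := Finset.univ.val.map v with ht
  have hcs : Multiset.card s = m := by simp [hs]
  have hct : Multiset.card t = m := by simp [ht]
  have hesymm : ∀ k ≤ m, s.esymm k = t.esymm k := by
    intro k hk
    have := esymm_eq_of_psum_eq u v h k hk
    rwa [aeval_esymm_eq_multiset_esymm, aeval_esymm_eq_multiset_esymm] at this
  have hprod : (s.map fun a => Polynomial.X - Polynomial.C a).prod
      = (t.map fun a => Polynomial.X - Polynomial.C a).prod := by
    apply Polynomial.ext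
    intro k
    by_cases hk : k ≤ m
    · rw [Multiset.prod_X_sub_C_coeff s (by rwa [hcs]),
        Multiset.prod_X_sub_C_coeff t (by rwa [hct]), hcs, hct,
        hesymm (m - k) (Nat.sub_le _ _)]
    · rw [Polynomial.coeff_eq_zero_of_natDegree_lt, Polynomial.coeff_eq_zero_of_natDegree_lt]
      · rw [Polynomial.natDegree_multiset_prod_X_sub_C_eq_card, hct]; omega
      · rw [Polynomial.natDegree_multiset_prod_X_sub_C_eq_card, hcs]; omega
  have := congrArg Polynomial.roots hprod
  rwa [Polynomial.roots_multiset_prod_X_sub_C, Polynomial.roots_multiset_prod_X_sub_C] at this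

lemma exists_perm_of_multiset_map_eq {m : ℕ} (u v : Fin m → ℝ)
    (h : Finset.univ.val.map u = Finset.univ.val.map v) :
    ∃ σ : Equiv.Perm (Fin m), ∀ i, u i = v (σ i) := by
  classical
  have hfib : ∀ c : ℝ, Fintype.card {i // u i = c} = Fintype.card {i // v i = c} := by
    intro c
    have hcount := congrArg (Multiset.count c) h
    rw [Multiset.count_map, Multiset.count_map] at hcount
    rw [Fintype.card_subtype, Fintype.card_subtype]
    simpa [Finset.filter, Finset.card, eq_comm] using hcount
  let e : ∀ c : ℝ, {i // u i = c} ≃ {i // v i = c} := fun c => Fintype.equivOfCardEq (hfib c)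
  exact ⟨Equiv.ofFiberEquiv e, fun i => (Equiv.ofFiberEquiv_map e i).symm⟩

lemma exists_perm_of_psum_eq {m : ℕ} (u v : Fin m → ℝ)
    (h : ∀ ℓ ∈ Finset.Icc 1 m, ∑ i, u i ^ ℓ = ∑ i, v i ^ ℓ) :
    ∃ σ : Equiv.Perm (Fin m), ∀ i, u i = v (σ i) :=
  exists_perm_of_multiset_map_eq u v (multiset_map_eq_of_psum_eq u v h)

lemma det_rect_mul_eq_zero {r : ℕ} (A : Matrix (Fin (r+1)) (Fin r) ℝ)
    (D : Matrix (Fin r) (Fin (r+1)) ℝ) : (A * D).det = 0 := by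
  by_contra hdet
  have hunit : IsUnit (A * D) := (Matrix.isUnit_iff_isUnit_det _).mpr (isUnit_iff_ne_zero.mpr hdet)
  have h1 : (A * D).rank = r + 1 := by
    rw [Matrix.rank_of_isUnit _ hunit, Fintype.card_fin]
  have h2 : (A * D).rank ≤ r := le_trans (Matrix.rank_mul_le_left A D)
    (by simpa using Matrix.rank_le_card_width A)
  omega

lemma permMatrix_mul_apply {m n : ℕ} (σ : Equiv.Perm (Fin m)) (X : Matrix (Fin m) (Fin n) ℝ)
    (i : Fin m) (j : Fin n) : (σ.permMatrix ℝ * X) i j = X (σ i) j := by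
  rw [Equiv.Perm.permMatrix, PEquiv.toMatrix_toPEquiv_mul]
  rfl

lemma submatrix_mul_submatrix {m n r s : ℕ} (B : Matrix (Fin m) (Fin r) ℝ)
    (C : Matrix (Fin r) (Fin n) ℝ) (f : Fin s → Fin m) (g : Fin s → Fin n) :
    (B * C).submatrix f g = B.submatrix f id * C.submatrix id g := by
  ext k l
  simp [Matrix.mul_apply]

lemma exists_emb_firsttwo {N r : ℕ} (hrN : r + 1 ≤ N) (hr : 1 ≤ r) (x y : Fin N) (hxy : x ≠ y) :
    ∃ e : Fin (r+1) ↪ Fin N, e 0 = x ∧ e 1 = y := by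
  have h01 : (0 : Fin (r+1)) ≠ 1 := by
    simp [Fin.ext_iff, Fin.val_one, Nat.mod_eq_of_lt (by omega : 1 < r + 1)]
  let e₀ : Fin (r+1) ↪ Fin N := ⟨Fin.castLE hrN, Fin.castLE_injective hrN⟩
  have he01 : e₀ 0 ≠ e₀ 1 := fun hc => h01 (e₀.injective hc)
  let τ₁ := Equiv.swap (e₀ 0) x
  have hy1 : τ₁ (e₀ 1) ≠ x := by
    intro hc
    exact he01 (τ₁.injective (by rw [hc, Equiv.swap_apply_left]))
  let τ₂ := Equiv.swap (τ₁ (e₀ 1)) y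
  refine ⟨e₀.trans (τ₁.toEmbedding.trans τ₂.toEmbedding), ?_, ?_⟩
  · show τ₂ (τ₁ (e₀ 0)) = x
    rw [show τ₁ (e₀ 0) = x from Equiv.swap_apply_left _ _]
    exact Equiv.swap_apply_of_ne_of_ne hy1.symm hxy
  · show τ₂ (τ₁ (e₀ 1)) = y
    exact Equiv.swap_apply_left _ _
section defs
variable (m n r : ℕ)

/-- row-twisted matrix: `(Xtw π X) i j = X ((π j) i) j`. -/
def Xtw (π : Fin n → Equiv.Perm (Fin m)) (X : Matrix (Fin m) (Fin n) ℝ) :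
    Matrix (Fin m) (Fin n) ℝ :=
  Matrix.of fun i j => X ((π j) i) j

/-- polynomial version of a minor of the twisted matrix -/
noncomputable def tminorPoly {s : ℕ} (π : Fin n → Equiv.Perm (Fin m))
    (f : Fin s → Fin m) (g : Fin s → Fin n) : MvPolynomial (Fin m × Fin n) ℝ :=
  (Matrix.of fun k l : Fin s =>
    (MvPolynomial.X ((π (g l)) (f k), g l) : MvPolynomial (Fin m × Fin n) ℝ)).det

def isConsistent (π : Fin n → Equiv.Perm (Fin m)) : Prop := ∃ σ, ∀ j, π j = σ

noncomputable def pR : MvPolynomial (Fin m × Fin n) ℝ :=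
  ∏ f : Fin r ↪ Fin m, ∑ g : Fin r ↪ Fin n,
    (tminorPoly m n (fun _ => 1) (⇑f) (⇑g)) ^ 2

open scoped Classical in
noncomputable def pT : MvPolynomial (Fin m × Fin n) ℝ :=
  ∏ π : Fin n → Equiv.Perm (Fin m),
    if isConsistent m n π then 1
    else ∑ f : Fin (r+1) ↪ Fin m, ∑ g : Fin (r+1) ↪ Fin n,
      (tminorPoly m n π (⇑f) (⇑g)) ^ 2

noncomputable def pMain : MvPolynomial (Fin m × Fin n) ℝ := pR m n r * pT m n r

end defs

lemma polyEval_tminor {m n s : ℕ} (π : Fin n → Equiv.Perm (Fin m))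
    (f : Fin s → Fin m) (g : Fin s → Fin n) (X : Matrix (Fin m) (Fin n) ℝ) :
    polyEval (tminorPoly m n π f g) X = ((Xtw m n π X).submatrix f g).det := by
  unfold polyEval tminorPoly
  rw [RingHom.map_det]
  congr 1
  ext k l
  simp [Xtw]

lemma Xtw_one {m n : ℕ} (X : Matrix (Fin m) (Fin n) ℝ) :
    Xtw m n (fun _ => 1) X = X := by
  ext i j; simp [Xtw]

lemma sum_sq_ne_zero {α : Type*} [Fintype α] (h : α → ℝ) (a : α) (ha : h a ≠ 0) :
    ∑ x : α, (h x) ^ 2 ≠ 0 := by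
  intro hc
  have := (Finset.sum_eq_zero_iff_of_nonneg (fun x _ => sq_nonneg (h x))).mp hc a (mem_univ a)
  exact ha (by simpa [pow_eq_zero_iff] using this)

/-- consequences at a point where `pMain` doesn't vanish -/
lemma conds_of_pMain_ne_zero {m n r : ℕ} (X : Matrix (Fin m) (Fin n) ℝ)
    (h : polyEval (pMain m n r) X ≠ 0) :
    (∀ f : Fin r ↪ Fin m, ∃ g : Fin r ↪ Fin n, (X.submatrix ⇑f ⇑g).det ≠ 0) ∧
    (∀ π : Fin n → Equiv.Perm (Fin m), ¬ isConsistent m n π →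
      ∃ (f : Fin (r+1) ↪ Fin m) (g : Fin (r+1) ↪ Fin n),
        ((Xtw m n π X).submatrix ⇑f ⇑g).det ≠ 0) := by
  classical
  have hhom : ∀ (p q : MvPolynomial (Fin m × Fin n) ℝ),
      polyEval (p * q) X = polyEval p X * polyEval q X := fun p q => map_mul _ _ _
  rw [pMain, hhom] at h
  have hR := left_ne_zero_of_mul h
  have hT := right_ne_zero_of_mul h
  constructor
  · intro f
    rw [pR] at hR
    have : polyEval (∑ g : Fin r ↪ Fin n,
        (tminorPoly m n (fun _ => 1) (⇑f) (⇑g)) ^ 2) X ≠ 0 := by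
      intro hc
      exact hR (by
        unfold polyEval at hc ⊢
        rw [map_prod]
        exact Finset.prod_eq_zero (mem_univ f) hc)
    unfold polyEval at this
    rw [map_sum] at this
    obtain ⟨g, _, hg⟩ := Finset.exists_ne_zero_of_sum_ne_zero this
    refine ⟨g, ?_⟩
    rw [map_pow] at hg
    have := pow_ne_zero_iff (n := 2) (by norm_num) |>.mp hg
    have h2 : polyEval (tminorPoly m n (fun _ => 1) (⇑f) (⇑g)) X ≠ 0 := this
    rw [polyEval_tminor, Xtw_one] at h2
    exact h2
  · intro π hπ
    rw [pT] at hT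
    have hfac : polyEval (∑ f : Fin (r+1) ↪ Fin m, ∑ g : Fin (r+1) ↪ Fin n,
        (tminorPoly m n π (⇑f) (⇑g)) ^ 2) X ≠ 0 := by
      intro hc
      apply hT
      unfold polyEval at hc ⊢
      rw [map_prod]
      refine Finset.prod_eq_zero (mem_univ π) ?_
      rw [if_neg hπ]
      exact hc
    unfold polyEval at hfac
    rw [map_sum] at hfac
    obtain ⟨f, _, hf⟩ := Finset.exists_ne_zero_of_sum_ne_zero hfac
    rw [map_sum] at hf
    obtain ⟨g, _, hg⟩ := Finset.exists_ne_zero_of_sum_ne_zero hf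
    rw [map_pow] at hg
    have : polyEval (tminorPoly m n π (⇑f) (⇑g)) X ≠ 0 :=
      pow_ne_zero_iff (n := 2) (by norm_num) |>.mp hg
    rw [polyEval_tminor] at this
    exact ⟨f, g, this⟩

open Matrix MvPolynomial Finset

noncomputable def substBC (m n r : ℕ) :
    MvPolynomial (Fin m × Fin n) ℝ →+* MvPolynomial ((Fin m × Fin r) ⊕ (Fin r × Fin n)) ℝ :=
  MvPolynomial.eval₂Hom MvPolynomial.C
    (fun q => ∑ k : Fin r, MvPolynomial.X (Sum.inl (q.1, k)) * MvPolynomial.X (Sum.inr (k, q.2)))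

lemma eval_substBC {m n r : ℕ} (B : Matrix (Fin m) (Fin r) ℝ) (C : Matrix (Fin r) (Fin n) ℝ)
    (p : MvPolynomial (Fin m × Fin n) ℝ) :
    MvPolynomial.eval
      (Sum.elim (fun q : Fin m × Fin r => B q.1 q.2) (fun q : Fin r × Fin n => C q.1 q.2))
      (substBC m n r p) = polyEval p (B * C) := by
  set y := Sum.elim (fun q : Fin m × Fin r => B q.1 q.2) (fun q : Fin r × Fin n => C q.1 q.2)
  rw [substBC, coe_eval₂Hom, MvPolynomial.eval_eval₂]
  have h1 : (MvPolynomial.eval y).comp (MvPolynomial.C (σ := (Fin m × Fin r) ⊕ (Fin r × Fin n)))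
      = RingHom.id ℝ := by
    ext a; simp
  rw [h1, MvPolynomial.eval₂_id]
  unfold polyEval
  have h2 : (fun s : Fin m × Fin n => MvPolynomial.eval y
      (∑ k : Fin r, MvPolynomial.X (Sum.inl (s.1, k)) * MvPolynomial.X (Sum.inr (k, s.2))))
      = fun q : Fin m × Fin n => (B * C) q.1 q.2 := by
    funext q
    simp [Matrix.mul_apply, y]
  rw [h2]

lemma substBC_ne_zero_of_witness {m n r : ℕ} {p : MvPolynomial (Fin m × Fin n) ℝ}
    (h : ∃ (B : Matrix (Fin m) (Fin r) ℝ) (C : Matrix (Fin r) (Fin n) ℝ),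
      polyEval p (B * C) ≠ 0) : substBC m n r p ≠ 0 := by
  obtain ⟨B, C, hBC⟩ := h
  intro hc
  rw [← eval_substBC B C p, hc] at hBC
  simp at hBC

lemma exists_BC_of_substBC_ne_zero {m n r : ℕ} {p : MvPolynomial (Fin m × Fin n) ℝ}
    (h : substBC m n r p ≠ 0) :
    ∃ (B : Matrix (Fin m) (Fin r) ℝ) (C : Matrix (Fin r) (Fin n) ℝ),
      polyEval p (B * C) ≠ 0 := by
  by_contra hc
  push_neg at hc
  apply h
  apply MvPolynomial.funext (q := 0)
  intro y
  rw [map_zero]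
  have hy : y = Sum.elim (fun q : Fin m × Fin r => (fun a (b : Fin r) => y (Sum.inl (a, b))) q.1 q.2)
      (fun q : Fin r × Fin n => (fun (a : Fin r) b => y (Sum.inr (a, b))) q.1 q.2) := by
    funext s; cases s <;> rfl
  rw [hy, eval_substBC (fun a b => y (Sum.inl (a, b))) (fun a b => y (Sum.inr (a, b)))]
  exact hc _ _
lemma sum_mul_indicator {r : ℕ} (f : Fin r → ℝ) (k₀ : Fin r) :
    ∑ k, f k * (if k = k₀ then (1:ℝ) else 0) = f k₀ := by
  simp

/-- Witness for the row-minors factor. -/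
lemma witness_W1 {m n r : ℕ} (hrm : r ≤ m) (hrn : r ≤ n) (f : Fin r ↪ Fin m) :
    ∃ (B : Matrix (Fin m) (Fin r) ℝ) (C : Matrix (Fin r) (Fin n) ℝ) (g : Fin r ↪ Fin n),
      ((B * C).submatrix ⇑f ⇑g).det ≠ 0 := by
  classical
  refine ⟨Matrix.of (fun i k => if i = f k then 1 else 0),
    Matrix.of (fun k j => if j = Fin.castLE hrn k then 1 else 0),
    ⟨Fin.castLE hrn, Fin.castLE_injective hrn⟩, ?_⟩
  have h1 : ((Matrix.of fun i k => if i = f k then (1:ℝ) else 0) *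
      (Matrix.of fun k j => if j = Fin.castLE hrn k then (1:ℝ) else 0)).submatrix
      ⇑f ⇑(⟨Fin.castLE hrn, Fin.castLE_injective hrn⟩ : Fin r ↪ Fin n) = 1 := by
    ext k l
    rw [Matrix.submatrix_apply, Matrix.mul_apply, Matrix.one_apply]
    simp only [Matrix.of_apply, Function.Embedding.coeFn_mk]
    rw [Finset.sum_eq_single k]
    · rw [if_pos rfl, one_mul]
      by_cases h : k = l
      · subst h; simp
      · rw [if_neg h, if_neg (fun hc => h ((Fin.castLE_injective hrn) hc).symm)]
    · intro t _ htk
      rw [if_neg (fun hc => htk (f.injective hc).symm), zero_mul]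
    · intro hk; exact absurd (Finset.mem_univ k) hk
  rw [h1]
  simp

/-- Witness for a bad-tuple factor. -/
lemma witness_W2 {m n r : ℕ} (hrm : r + 1 ≤ m) (hrn : r + 1 ≤ n) (hr1 : 1 ≤ r)
    (π : Fin n → Equiv.Perm (Fin m)) (hπ : ¬ isConsistent m n π) :
    ∃ (B : Matrix (Fin m) (Fin r) ℝ) (C : Matrix (Fin r) (Fin n) ℝ)
      (w : Fin (r+1) ↪ Fin m) (c : Fin (r+1) ↪ Fin n),
      (Xtw m n π (B * C)).submatrix ⇑w ⇑c = 1 := by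
  classical
  -- find two coordinates where the tuple is inconsistent
  have hn0 : 0 < n := by omega
  let j1 : Fin n := ⟨0, hn0⟩
  have hj2 : ∃ j2, π j2 ≠ π j1 := by
    by_contra hc
    push_neg at hc
    exact hπ ⟨π j1, hc⟩
  obtain ⟨j2, hj2⟩ := hj2
  have hj12 : j1 ≠ j2 := fun hc => hj2 (by rw [hc])
  have histar : ∃ i, (π j1) i ≠ (π j2) i := by
    by_contra hc
    push_neg at hc
    exact hj2 (Equiv.ext fun i => (hc i).symm)
  obtain ⟨istar, histar⟩ := histar
  set a := (π j1) istar with ha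
  set b := (π j2).symm a with hb
  have hbstar : istar ≠ b := by
    intro hc
    apply histar
    rw [hc, hb]
    exact ((π j2).apply_symm_apply a).symm
  obtain ⟨w, hw0, hw1⟩ := exists_emb_firsttwo hrm hr1 istar b hbstar
  obtain ⟨c, hc0, hc1⟩ := exists_emb_firsttwo hrn hr1 j1 j2 hj12
  let z : Fin r := ⟨0, hr1⟩
  have hone : (1 : Fin (r+1)).val = 1 := by
    rw [Fin.val_one']
    exact Nat.mod_eq_of_lt (by omega)
  have hsucc_ne_one : ∀ k : Fin r, k ≠ z → (k.succ : Fin (r+1)) ≠ 1 := by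
    intro k hk hc
    apply hk
    have h3 : (k.succ : Fin (r+1)).val = (1 : Fin (r+1)).val := congrArg Fin.val hc
    rw [Fin.val_succ, hone] at h3
    have h4 : (k : ℕ) = 0 := by omega
    exact Fin.val_injective (by simpa [z] using h4)
  let B : Matrix (Fin m) (Fin r) ℝ :=
    Matrix.of fun i k => if k = z then (if i = a then 1 else 0)
      else (if i = (π (c k.succ)) (w k.succ) then 1 else 0)
  let C : Matrix (Fin r) (Fin n) ℝ :=
    Matrix.of fun k j => if k = z then (if j = c 0 ∨ j = c 1 then 1 else 0)
      else (if j = c k.succ then 1 else 0)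
  refine ⟨B, C, w, c, ?_⟩
  have hBz : ∀ x, B x z = if x = a then (1:ℝ) else 0 := by
    intro x; simp [B]
  have hBk : ∀ (x) (k : Fin r), k ≠ z →
      B x k = if x = (π (c k.succ)) (w k.succ) then (1:ℝ) else 0 := by
    intro x k hk; simp only [B, Matrix.of_apply]; rw [if_neg hk]
  have hCz : ∀ j, C z j = if j = c 0 ∨ j = c 1 then (1:ℝ) else 0 := by
    intro j; simp [C]
  have hCk : ∀ (j) (k : Fin r), k ≠ z →
      C k j = if j = c k.succ then (1:ℝ) else 0 := by
    intro j k hk; simp only [C, Matrix.of_apply]; rw [if_neg hk]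
  ext p t
  rw [Matrix.submatrix_apply, Matrix.one_apply]
  show (B * C) ((π (c t)) (w p)) (c t) = _
  rw [Matrix.mul_apply]
  rcases eq_or_ne t 0 with rfl | ht0
  · -- column j1
    have hC : ∀ k : Fin r, C k (c 0) = if k = z then 1 else 0 := by
      intro k
      rcases eq_or_ne k z with rfl | hk
      · rw [hCz, if_pos (Or.inl rfl), if_pos rfl]
      · rw [hCk _ _ hk, if_neg hk, if_neg]
        intro hcc
        exact Fin.succ_ne_zero k (c.injective hcc).symm
    rw [Finset.sum_congr rfl (fun k _ => by rw [hC k]),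
      sum_mul_indicator (fun k => B ((π (c 0)) (w p)) k) z, hBz]
    have hiff : (π (c 0)) (w p) = a ↔ p = 0 := by
      rw [hc0, ha]
      constructor
      · intro h; exact w.injective (((π j1).injective h).trans hw0.symm)
      · intro h; rw [h, hw0]
    simp [hiff]
  rcases eq_or_ne t 1 with rfl | ht1
  · -- column j2
    have hC : ∀ k : Fin r, C k (c 1) = if k = z then 1 else 0 := by
      intro k
      rcases eq_or_ne k z with rfl | hk
      · rw [hCz, if_pos (Or.inr rfl), if_pos rfl]
      · rw [hCk _ _ hk, if_neg hk, if_neg]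
        intro hcc
        exact hsucc_ne_one k hk (c.injective hcc).symm
    rw [Finset.sum_congr rfl (fun k _ => by rw [hC k]),
      sum_mul_indicator (fun k => B ((π (c 1)) (w p)) k) z, hBz]
    have hiff : (π (c 1)) (w p) = a ↔ p = 1 := by
      rw [hc1]
      constructor
      · intro h
        apply w.injective
        have h2 : w p = (Equiv.symm (π j2)) a := (Equiv.eq_symm_apply (π j2)).mpr h
        rw [h2, hw1, hb]
      · intro h
        rw [h, hw1, hb]
        simp
    simp [hiff]
  · -- other columns
    obtain ⟨k₀, hk₀⟩ : ∃ k₀ : Fin r, t = k₀.succ := ⟨t.pred ht0, (Fin.succ_pred t ht0).symm⟩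
    have hk₀z : k₀ ≠ z := by
      intro hc
      apply ht1
      have h6 : (z.succ : Fin (r+1)) = 1 := Fin.val_injective (by rw [Fin.val_succ, hone])
      rw [hk₀, hc, h6]
    have hC : ∀ k : Fin r, C k (c t) = if k = k₀ then 1 else 0 := by
      intro k
      rcases eq_or_ne k z with rfl | hk
      · rw [hCz, if_neg, if_neg (Ne.symm hk₀z)]
        rintro (hcc | hcc)
        · exact ht0 (c.injective hcc)
        · exact ht1 (c.injective hcc)
      · rw [hCk _ _ hk]
        have hiff2 : c t = c k.succ ↔ k = k₀ := by
          constructor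
          · intro hcc
            have h5 := c.injective hcc
            rw [hk₀] at h5
            exact (Fin.succ_injective r h5).symm
          · intro hcc
            rw [hcc, hk₀]
        rw [if_congr hiff2 rfl rfl]
    rw [Finset.sum_congr rfl (fun k _ => by rw [hC k]),
      sum_mul_indicator (fun k => B ((π (c t)) (w p)) k) k₀, hBk _ _ hk₀z]
    have hiff : (π (c t)) (w p) = (π (c k₀.succ)) (w k₀.succ) ↔ p = t := by
      rw [← hk₀]
      constructor
      · intro h; exact w.injective ((π (c t)).injective h)
      · intro h; rw [h]
    simp [hiff]
lemma sum_sum_sq_ne_zero {α β : Type*} [Fintype α] [Fintype β] (h : α → β → ℝ) (a : α) (b : β)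
    (hab : h a b ≠ 0) : ∑ x : α, ∑ y : β, (h x y) ^ 2 ≠ 0 := by
  intro hc
  have houter : ∀ x ∈ Finset.univ (α := α), (0:ℝ) ≤ ∑ y : β, (h x y) ^ 2 :=
    fun x _ => Finset.sum_nonneg fun y _ => sq_nonneg _
  have h1 := (Finset.sum_eq_zero_iff_of_nonneg houter).mp hc a (Finset.mem_univ a)
  exact sum_sq_ne_zero (h a) b hab h1

lemma exists_good_point {m n r : ℕ} (hrm : r + 1 ≤ m) (hrn : r + 1 ≤ n) (hr1 : 1 ≤ r) :
    ∃ X : Matrix (Fin m) (Fin n) ℝ, X.rank ≤ r ∧ polyEval (pMain m n r) X ≠ 0 := by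
  classical
  have hsub : substBC m n r (pMain m n r) ≠ 0 := by
    rw [pMain, _root_.map_mul]
    apply mul_ne_zero
    · rw [pR, map_prod, Finset.prod_ne_zero_iff]
      intro f _
      apply substBC_ne_zero_of_witness
      obtain ⟨B, C, g, hg⟩ := witness_W1 (m := m) (n := n)
        (show r ≤ m by omega) (show r ≤ n by omega) f
      refine ⟨B, C, ?_⟩
      unfold polyEval
      simp only [map_sum, map_pow]
      apply sum_sq_ne_zero (fun gg : Fin r ↪ Fin n =>
        MvPolynomial.eval (fun q : Fin m × Fin n => (B * C) q.1 q.2)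
          (tminorPoly m n (fun _ => 1) (⇑f) (⇑gg))) g
      show polyEval (tminorPoly m n (fun _ => 1) (⇑f) (⇑g)) (B * C) ≠ 0
      rw [polyEval_tminor, Xtw_one]
      exact hg
    · rw [pT, map_prod, Finset.prod_ne_zero_iff]
      intro π _
      by_cases hπ : isConsistent m n π
      · rw [if_pos hπ, _root_.map_one]
        exact one_ne_zero
      · rw [if_neg hπ]
        apply substBC_ne_zero_of_witness
        obtain ⟨B, C, w, c, hwc⟩ := witness_W2 hrm hrn hr1 π hπ
        refine ⟨B, C, ?_⟩
        unfold polyEval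
        simp only [map_sum, map_pow]
        apply sum_sum_sq_ne_zero (fun (ff : Fin (r+1) ↪ Fin m) (gg : Fin (r+1) ↪ Fin n) =>
          MvPolynomial.eval (fun q : Fin m × Fin n => (B * C) q.1 q.2)
            (tminorPoly m n π (⇑ff) (⇑gg))) w c
        show polyEval (tminorPoly m n π (⇑w) (⇑c)) (B * C) ≠ 0
        rw [polyEval_tminor, hwc]
        simp
  obtain ⟨B, C, hBC⟩ := exists_BC_of_substBC_ne_zero hsub
  refine ⟨B * C, ?_, hBC⟩
  calc (B * C).rank ≤ B.rank := Matrix.rank_mul_le_left B C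
    _ ≤ Fintype.card (Fin r) := Matrix.rank_le_card_width B
    _ = r := Fintype.card_fin r
lemma sum_indicator_mul {r : ℕ} (v : Fin r → ℝ) (k : Fin r) :
    ∑ t, (if k = t then (1:ℝ) else 0) * v t = v k := by
  simp

lemma matrix_eq_zero_of_rank_le_zero {m n : ℕ} (X : Matrix (Fin m) (Fin n) ℝ)
    (h : X.rank ≤ 0) : X = 0 := by
  have h0 : X.rank = 0 := Nat.le_zero.mp h
  have hbot : LinearMap.range X.mulVecLin = ⊥ := Submodule.finrank_eq_zero.mp h0
  have hv : ∀ v, X.mulVec v = 0 := by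
    intro v
    have h2 : X.mulVecLin v ∈ LinearMap.range X.mulVecLin := LinearMap.mem_range_self _ v
    rw [hbot] at h2
    simpa using h2
  ext i j
  have h3 := congrFun (hv (Pi.single j 1)) i
  simpa [Matrix.mulVec, dotProduct, Pi.single_apply] using h3

lemma existsUnique_factorization {m n r : ℕ} (hrm : r ≤ m) (X : Matrix (Fin m) (Fin n) ℝ)
    (hrank : X.rank ≤ r)
    (hR : ∀ f : Fin r ↪ Fin m, ∃ g : Fin r ↪ Fin n, (X.submatrix ⇑f ⇑g).det ≠ 0)
    (σ : Equiv.Perm (Fin m)) :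
    ∃! p : Matrix (Fin m) (Fin r) ℝ × Matrix (Fin r) (Fin n) ℝ,
      topIdentity hrm p.1 ∧ σ.permMatrix ℝ * X = p.1 * p.2 := by
  classical
  obtain ⟨B₀, C₀, hX⟩ := exists_factorization X hrank
  set f : Fin r ↪ Fin m :=
    ⟨fun k => σ (Fin.castLE hrm k), fun k l h => by
      exact Fin.castLE_injective hrm (σ.injective h)⟩ with hf
  obtain ⟨g, hg⟩ := hR f
  set A : Matrix (Fin r) (Fin r) ℝ :=
    Matrix.of fun k l => B₀ (σ (Fin.castLE hrm k)) l with hA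
  have hkey : X.submatrix ⇑f ⇑g = A * C₀.submatrix id ⇑g := by
    ext k l
    rw [Matrix.submatrix_apply, hX, Matrix.mul_apply, Matrix.mul_apply]
    rfl
  have hdetA : IsUnit A.det := by
    rw [hkey, Matrix.det_mul] at hg
    exact isUnit_iff_ne_zero.mpr (left_ne_zero_of_mul hg)
  -- the canonical solution
  set QB : Matrix (Fin m) (Fin r) ℝ := Matrix.of fun i k => B₀ (σ i) k with hQB
  have hQX : σ.permMatrix ℝ * X = QB * C₀ := by
    ext i j
    rw [permMatrix_mul_apply, hX, Matrix.mul_apply, Matrix.mul_apply]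
    rfl
  set Bstar := QB * A⁻¹ with hBstar
  set Cstar := A * C₀ with hCstar
  have hfact : σ.permMatrix ℝ * X = Bstar * Cstar := by
    rw [hQX, hBstar, hCstar, Matrix.mul_assoc, ← Matrix.mul_assoc A⁻¹ A C₀,
      Matrix.nonsing_inv_mul A hdetA, Matrix.one_mul]
  have htopstar : topIdentity hrm Bstar := by
    intro i k
    have h1 : Bstar (Fin.castLE hrm i) k = (A * A⁻¹) i k := by
      rw [hBstar, Matrix.mul_apply, Matrix.mul_apply]
      rfl
    rw [h1, Matrix.mul_nonsing_inv A hdetA, Matrix.one_apply]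
  -- data determined by any solution
  set Ctop : Matrix (Fin r) (Fin n) ℝ :=
    Matrix.of fun k j => (σ.permMatrix ℝ * X) (Fin.castLE hrm k) j with hCtop
  set D := Ctop.submatrix id ⇑g with hD
  have hDX : D = X.submatrix ⇑f ⇑g := by
    ext k l
    rw [hD, Matrix.submatrix_apply, hCtop, Matrix.of_apply, permMatrix_mul_apply]
    rfl
  have hdetD : IsUnit D.det := by
    rw [hDX]
    exact isUnit_iff_ne_zero.mpr hg
  have huniq : ∀ (B : Matrix (Fin m) (Fin r) ℝ) (C : Matrix (Fin r) (Fin n) ℝ),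
      topIdentity hrm B → σ.permMatrix ℝ * X = B * C →
      C = Ctop ∧ B = ((σ.permMatrix ℝ * X).submatrix id ⇑g) * D⁻¹ := by
    intro B C htop heq
    have hC : C = Ctop := by
      ext k j
      rw [hCtop, Matrix.of_apply, heq, Matrix.mul_apply]
      rw [Finset.sum_congr rfl (fun t _ => by rw [htop k t]),
        sum_indicator_mul (fun t => C t j) k]
    have hBD : B * D = (σ.permMatrix ℝ * X).submatrix id ⇑g := by
      ext i l
      rw [Matrix.mul_apply, Matrix.submatrix_apply, heq, Matrix.mul_apply]
      subst hC
      rfl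
    constructor
    · exact hC
    · rw [← hBD, Matrix.mul_assoc, Matrix.mul_nonsing_inv D hdetD, Matrix.mul_one]
  refine ⟨(Bstar, Cstar), ⟨htopstar, hfact⟩, ?_⟩
  rintro ⟨B, C⟩ ⟨htop, heq⟩
  obtain ⟨hC1, hB1⟩ := huniq B C htop heq
  obtain ⟨hC2, hB2⟩ := huniq Bstar Cstar htopstar hfact
  ext : 1
  · show B = Bstar
    rw [hB1, hB2]
  · show C = Cstar
    rw [hC1, hC2]

end Auxiliary

open Matrix MvPolynomial Finset

theorem stmt1 (m n r : ℕ) (hr : r < min m n) :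
    ∃ U : Set (Matrix (Fin m) (Fin n) ℝ),
      IsZariskiOpenDense m n r U ∧
      ∀ Xstar ∈ U,
        (∀ Q : Matrix (Fin m) (Fin m) ℝ, IsPermMatrix Q →
          ∃! p : Matrix (Fin m) (Fin r) ℝ × Matrix (Fin r) (Fin n) ℝ,
            topIdentity (hr.trans_le (min_le_left m n)).le p.1 ∧
              Q * Xstar = p.1 * p.2) ∧
        YX (hr.trans_le (min_le_left m n)).le Xstar =
          {p | topIdentity (hr.trans_le (min_le_left m n)).le p.1 ∧
            ∃ Q : Matrix (Fin m) (Fin m) ℝ, IsPermMatrix Q ∧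
              Q * Xstar = p.1 * p.2} := by
  rcases Nat.eq_zero_or_pos r with rfl | hr1
  · -- degenerate case r = 0
    refine ⟨detVar m n 0, ⟨1, fun _ => 1, ⟨0, 0, ?_, ?_⟩, ?_⟩, ?_⟩
    · show (0 : Matrix (Fin m) (Fin n) ℝ).rank ≤ 0
      rw [Matrix.rank_zero]
    · show polyEval 1 0 ≠ 0
      unfold polyEval
      rw [_root_.map_one]
      exact one_ne_zero
    · refine Set.ext fun X => ⟨fun h => ⟨h, 0, ?_⟩, fun h => h.1⟩
      unfold polyEval
      rw [_root_.map_one]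
      exact one_ne_zero
    · intro Xstar hX
      have hX0 : Xstar = 0 := matrix_eq_zero_of_rank_le_zero Xstar hX
      subst hX0
      have hmul0 : ∀ (B : Matrix (Fin m) (Fin 0) ℝ) (C : Matrix (Fin 0) (Fin n) ℝ),
          B * C = 0 := by
        intro B C
        ext i j
        simp [Matrix.mul_apply]
      constructor
      · intro Q _
        refine ⟨(0, 0), ⟨fun i k => i.elim0, by rw [Matrix.mul_zero, hmul0]⟩, ?_⟩
        rintro ⟨B, C⟩ _
        have hB : B = 0 := by ext i k; exact k.elim0
        have hC : C = 0 := by ext k j; exact k.elim0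
        rw [hB, hC]
      · ext p
        simp only [YX, Set.mem_setOf_eq]
        constructor
        · rintro ⟨htop, _⟩
          exact ⟨htop, (1 : Equiv.Perm (Fin m)).permMatrix ℝ, ⟨1, rfl⟩,
            by rw [Matrix.mul_zero, hmul0]⟩
        · rintro ⟨htop, _, _, _⟩
          refine ⟨htop, fun ℓ _ j => ?_⟩
          rw [hmul0 p.1 p.2]
  · -- main case r ≥ 1
    have hrm1 : r + 1 ≤ m := hr.trans_le (min_le_left m n)
    have hrn1 : r + 1 ≤ n := hr.trans_le (min_le_right m n)
    refine ⟨{X ∈ detVar m n r | polyEval (pMain m n r) X ≠ 0},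
      ⟨1, fun _ => pMain m n r, ?_, ?_⟩, ?_⟩
    · obtain ⟨X, hX1, hX2⟩ := exists_good_point hrm1 hrn1 hr1
      exact ⟨0, X, hX1, hX2⟩
    · exact Set.ext fun X => ⟨fun ⟨h1, h2⟩ => ⟨h1, 0, h2⟩, fun ⟨h1, _, h2⟩ => ⟨h1, h2⟩⟩
    · rintro Xstar ⟨hrank, hp⟩
      obtain ⟨hR, hT⟩ := conds_of_pMain_ne_zero Xstar hp
      constructor
      · rintro Q ⟨σ, rfl⟩
        exact existsUnique_factorization (hr.trans_le (min_le_left m n)).le Xstar hrank hR σ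
      · ext p
        simp only [YX, Set.mem_setOf_eq]
        constructor
        · rintro ⟨htop, hpow⟩
          have hcol : ∀ j, ∃ σj : Equiv.Perm (Fin m),
              ∀ i, (p.1 * p.2) i j = Xstar (σj i) j := by
            intro j
            exact exists_perm_of_psum_eq (fun i => (p.1 * p.2) i j) (fun i => Xstar i j)
              (fun ℓ hℓ => hpow ℓ hℓ j)
          choose π hπ using hcol
          by_cases hcons : isConsistent m n π
          · obtain ⟨σ, hσ⟩ := hcons
            refine ⟨htop, σ.permMatrix ℝ, ⟨σ, rfl⟩, ?_⟩
            ext i j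
            rw [permMatrix_mul_apply, ← hσ j]
            exact (hπ j i).symm
          · exfalso
            obtain ⟨f, g, hdet⟩ := hT π hcons
            have hY : Xtw m n π Xstar = p.1 * p.2 := by
              ext i j
              exact (hπ j i).symm
            exact hdet (by
              rw [hY, submatrix_mul_submatrix p.1 p.2 ⇑f ⇑g]
              exact det_rect_mul_eq_zero _ _)
        · rintro ⟨htop, Q, ⟨σ, rfl⟩, heq⟩
          refine ⟨htop, fun ℓ _ j => ?_⟩
          have h1 : ∀ i, (p.1 * p.2) i j = Xstar (σ i) j := by
            intro i
            rw [← heq, permMatrix_mul_apply]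
          rw [Finset.sum_congr rfl (fun i _ => by rw [h1 i])]
          exact Equiv.sum_comp σ (fun i => Xstar i j ^ ℓ)
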